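/- Let R be a commutative local ring and let A(x) ∈ M_2(R[[x]]) be a 2×2 matrix with power series entries, with A(0) ∈ M_2(R) the matrix of constant coefficients. Then A(x) is very clean in M_2(R[[x]]) if and only if A(0) is very clean in M_2(R). -/

import Mathlib

/-- An element `a` of a ring is *very clean* if there is an idempotent `e` commuting with `a`
such that `a - e` or `a + e` is a unit. -/
def IsVeryClean {R : Type*} [Ring R] (a : R) : Prop :=
  ∃ e : R, IsIdempotentElem e ∧ a * e = e * a ∧ (IsUnit (a - e) ∨ IsUnit (a + e))

/-- A ring is *very clean* if every element is very clean. -/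
def VeryCleanRing (R : Type*) [Ring R] : Prop :=
  ∀ a : R, IsVeryClean a

/-- An element `a` of a ring is *strongly clean* if there is an idempotent `e` commuting with `a`
such that `a - e` is a unit. -/
def IsStronglyClean {R : Type*} [Ring R] (a : R) : Prop :=
  ∃ e : R, IsIdempotentElem e ∧ a * e = e * a ∧ IsUnit (a - e)

/-- A ring is *strongly clean* if every element is strongly clean. -/
def StronglyCleanRing (R : Type*) [Ring R] : Prop :=
  ∀ a : R, IsStronglyClean a

open PowerSeries

private noncomputable def VCzseq {R : Type*} [CommRing R] (w c : R⟦X⟧) : ℕ → R⟦X⟧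
  | 0 => 0
  | n + 1 => -(w * (c + VCzseq w c n * VCzseq w c n))

private lemma VC_quad_root {R : Type*} [CommRing R] (b c : R⟦X⟧)
    (hb : IsUnit b) (hc : constantCoeff (R := R) c = 0) :
    ∃ z : R⟦X⟧, z * z + b * z + c = 0 ∧ constantCoeff (R := R) z = 0 := by
  obtain ⟨w, hw⟩ := isUnit_iff_exists_inv.mp hb
  set zs : ℕ → R⟦X⟧ := VCzseq w c with hzs
  have hstep : ∀ n, zs (n + 1) = -(w * (c + zs n * zs n)) := fun n => rfl
  have h1 : ∀ n, constantCoeff (R := R) (zs n) = 0 := by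
    intro n
    induction n with
    | zero => simp [hzs, VCzseq]
    | succ n ih => rw [hstep]; simp [ih, hc]
  have hXdvd : ∀ n, (X : R⟦X⟧) ∣ zs n := fun n => X_dvd_iff.mpr (h1 n)
  have h2 : ∀ n, (X : R⟦X⟧) ^ (n + 1) ∣ zs (n + 1) - zs n := by
    intro n
    induction n with
    | zero =>
      have h0 : zs 0 = 0 := rfl
      rw [hstep, h0, pow_one]
      have : (X : R⟦X⟧) ∣ c := X_dvd_iff.mpr hc
      obtain ⟨c', rfl⟩ := this
      exact ⟨-(w * c'), by ring⟩
    | succ n ih =>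
      have key : zs (n + 2) - zs (n + 1) =
          -(w * ((zs (n+1) + zs n) * (zs (n + 1) - zs n))) := by
        rw [hstep (n+1), hstep n]; ring
      rw [key]
      obtain ⟨d, hd⟩ := ih
      obtain ⟨u, hu⟩ := hXdvd (n + 1)
      obtain ⟨v, hv⟩ := hXdvd n
      refine ⟨-(w * ((u + v) * d)), ?_⟩
      rw [hd, hu, hv]; ring
  have h3 : ∀ n m, m ≤ n → coeff (R := R) m (zs (n + 1)) = coeff (R := R) m (zs (m + 1)) := by
    intro n
    induction n with
    | zero => intro m hm; interval_cases m; rfl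
    | succ n ih =>
      intro m hm
      rcases Nat.lt_or_ge m (n + 1) with h | h
      · have heq : coeff (R := R) m (zs (n + 2)) = coeff (R := R) m (zs (n + 1)) := by
          have := (X_pow_dvd_iff.mp (h2 (n + 1))) m (by omega)
          rw [map_sub, sub_eq_zero] at this
          exact this
        rw [heq]; exact ih m (by omega)
      · have : m = n + 1 := by omega
        subst this; rfl
  clear_value zs
  set z : R⟦X⟧ := PowerSeries.mk (fun m => coeff (R := R) m (zs (m + 1))) with hz
  have hzco : ∀ m, coeff (R := R) m z = coeff (R := R) m (zs (m + 1)) := by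
    intro m; rw [hz, coeff_mk]
  clear_value z
  have h4 : ∀ n, (X : R⟦X⟧) ^ (n + 1) ∣ z - zs (n + 1) := by
    intro n
    rw [X_pow_dvd_iff]
    intro m hm
    rw [map_sub, hzco, h3 n m (by omega), sub_self]
  have hz0 : constantCoeff (R := R) z = 0 := by
    rw [← coeff_zero_eq_constantCoeff_apply, hzco,
      coeff_zero_eq_constantCoeff_apply, h1]
  refine ⟨z, ?_, hz0⟩
  have key : ∀ n : ℕ, (X : R⟦X⟧) ^ (n + 2) ∣ z * z + b * z + c := by
    intro n
    have hlast : zs (n + 2) * zs (n + 2) + b * zs (n + 3) + c = 0 := by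
      rw [hstep (n + 2)]
      have : b * -(w * (c + zs (n+2) * zs (n+2))) =
          -((b * w) * (c + zs (n+2) * zs (n+2))) := by ring
      rw [this, hw]; ring
    have hid : z * z + b * z + c =
        (z - zs (n + 2)) * (z + zs (n + 2)) + b * (z - zs (n + 3)) +
          (zs (n + 2) * zs (n + 2) + b * zs (n + 3) + c) := by ring
    rw [hid, hlast, add_zero]
    apply dvd_add
    · exact Dvd.dvd.mul_right (h4 (n + 1)) _
    · exact Dvd.dvd.mul_left (dvd_trans (pow_dvd_pow _ (by omega)) (h4 (n + 2))) _
  ext k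
  rw [map_zero]
  exact X_pow_dvd_iff.mp (key k) k (by omega)

private lemma VC_ch2 {T : Type*} [CommRing T] (M : Matrix (Fin 2) (Fin 2) T) :
    M * M = (Matrix.trace M) • M - (M.det) • 1 := by
  ext i j
  fin_cases i <;> fin_cases j <;>
    simp [Matrix.mul_apply, Matrix.trace_fin_two, Matrix.det_fin_two,
      Fin.sum_univ_two, Matrix.one_apply] <;> ring

private lemma VC_det_comb {T : Type*} [CommRing T] (M : Matrix (Fin 2) (Fin 2) T) (s p : T) :
    (s • M + p • 1).det = s^2 * M.det + s * p * Matrix.trace M + p^2 := by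
  simp [Matrix.det_fin_two, Matrix.trace_fin_two, Matrix.one_apply]
  ring

private lemma VC_det_add2 {T : Type*} [CommRing T] (M N : Matrix (Fin 2) (Fin 2) T) :
    (M + N).det = M.det + N.det + Matrix.trace M * Matrix.trace N - Matrix.trace (M * N) := by
  simp [Matrix.det_fin_two, Matrix.trace_fin_two, Matrix.mul_apply, Fin.sum_univ_two]
  ring

private lemma VC_trace_map2 {T U : Type*} [CommRing T] [CommRing U] (f : T →+* U)
    (M : Matrix (Fin 2) (Fin 2) T) : Matrix.trace (M.map f) = f (Matrix.trace M) := by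
  simp [Matrix.trace_fin_two]

private lemma VC_unit_lift {R : Type*} [CommRing R] (B : Matrix (Fin 2) (Fin 2) R⟦X⟧) :
    IsUnit B ↔ IsUnit (B.map (constantCoeff (R := R))) := by
  rw [Matrix.isUnit_iff_isUnit_det, Matrix.isUnit_iff_isUnit_det,
    ← RingHom.mapMatrix_apply, ← RingHom.map_det, ← PowerSeries.isUnit_iff_constantCoeff]

private lemma VC_idem_local {R : Type*} [CommRing R] [IsLocalRing R] {a : R}
    (h : a * a = a) : a = 0 ∨ a = 1 := by
  rcases IsLocalRing.isUnit_or_isUnit_of_add_one (a := a) (b := 1 - a) (by ring) with hu | hu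
  · right
    obtain ⟨w, hw⟩ := isUnit_iff_exists_inv.mp hu
    have := congrArg (· * w) h
    simp only [mul_assoc, hw, mul_one] at this
    exact this
  · left
    obtain ⟨w, hw⟩ := isUnit_iff_exists_inv.mp hu
    have h2 : a * (1 - a) = 0 := by rw [mul_sub, mul_one, h, sub_self]
    have := congrArg (· * w) h2
    simp only [mul_assoc, hw, mul_one, zero_mul] at this
    exact this

private lemma VC_map_affine {R : Type*} [CommRing R] (B E : Matrix (Fin 2) (Fin 2) R⟦X⟧)
    (t : R) : (B + (C (R := R) t) • E).map (constantCoeff (R := R)) =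
      B.map (constantCoeff (R := R)) + t • (E.map (constantCoeff (R := R))) := by
  ext i j
  simp [Matrix.map_apply, Matrix.add_apply, Matrix.smul_apply, smul_eq_mul]

private lemma VC_core {R : Type*} [CommRing R] [IsLocalRing R]
    (A : Matrix (Fin 2) (Fin 2) R⟦X⟧) (σ : R)
    (e : Matrix (Fin 2) (Fin 2) R) (he : IsIdempotentElem e)
    (hcomm : (A.map (constantCoeff (R := R))) * e = e * (A.map (constantCoeff (R := R))))
    (hu : IsUnit (A.map (constantCoeff (R := R)) + σ • e)) :
    ∃ E : Matrix (Fin 2) (Fin 2) R⟦X⟧,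
      IsIdempotentElem E ∧ A * E = E * A ∧ IsUnit (A + (C (R := R) σ) • E) := by
  set Abar := A.map (constantCoeff (R := R)) with hAbar
  have hdet2 : e.det * e.det = e.det := by rw [← Matrix.det_mul, he]
  rcases VC_idem_local hdet2 with hd0 | hd1
  · -- det e = 0
    have hee : e * e = e := he
    have hch_e : e * e = (Matrix.trace e) • e - e.det • 1 := VC_ch2 e
    have he_tr : e = (Matrix.trace e) • e :=
      calc e = e * e := hee.symm
        _ = (Matrix.trace e) • e - e.det • 1 := hch_e
        _ = (Matrix.trace e) • e := by rw [hd0, zero_smul, sub_zero]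
    have htr2 : Matrix.trace e * Matrix.trace e = Matrix.trace e := by
      have h := congrArg Matrix.trace he_tr
      rw [Matrix.trace_smul, smul_eq_mul] at h
      exact h.symm
    rcases VC_idem_local htr2 with ht0 | ht1
    · -- trace e = 0, e = 0, A is a unit
      have he0 : e = 0 := by rw [he_tr, ht0, zero_smul]
      have hAu : IsUnit A := by
        rw [VC_unit_lift]
        simpa [he0] using hu
      exact ⟨0, IsIdempotentElem.zero, by rw [mul_zero, zero_mul],
        by simpa using hAu⟩
    · -- main case: trace e = 1, det e = 0
      set τb := Matrix.trace Abar with hτb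
      set l1 := Matrix.trace (Abar * e) with hl1
      set l0 := τb - l1 with hl0
      set δb := Abar.det with hδb
      -- T1 : l0 * l1 = δb
      have hdetAe : (Abar * e).det = 0 := by rw [Matrix.det_mul, hd0, mul_zero]
      have hch1 : (Abar * e) * (Abar * e) = l1 • (Abar * e) := by
        rw [VC_ch2, hdetAe, zero_smul, sub_zero]
      have hsq : (Abar * e) * (Abar * e) = (Abar * Abar) * e := by
        rw [mul_assoc, ← mul_assoc e Abar e, ← hcomm, mul_assoc Abar e e, hee,
          ← mul_assoc]
      have hch2 : (Abar * Abar) * e = τb • (Abar * e) - δb • e := by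
        rw [VC_ch2, Matrix.sub_mul, Matrix.smul_mul, Matrix.smul_mul, one_mul]
      have hkey : τb • (Abar * e) - δb • e = l1 • (Abar * e) := by
        rw [← hch2, ← hsq, hch1]
      have htr := congrArg Matrix.trace hkey
      rw [Matrix.trace_sub, Matrix.trace_smul, Matrix.trace_smul, Matrix.trace_smul,
        ht1, smul_eq_mul, smul_eq_mul, smul_eq_mul, mul_one] at htr
      have T1 : l0 * l1 = δb := by rw [hl0]; linear_combination htr
      -- T2 : det (Abar + σ • e) = l0 * (l1 + σ)
      have hdet_se : (σ • e).det = 0 := by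
        rw [Matrix.det_smul, hd0, mul_zero]
      have T2 : (Abar + σ • e).det = l0 * (l1 + σ) := by
        rw [VC_det_add2, hdet_se, Matrix.trace_smul, Matrix.mul_smul,
          Matrix.trace_smul, ht1, smul_eq_mul, smul_eq_mul, mul_one]
        linear_combination -T1 - σ * hl0
      have hUprod : IsUnit (l0 * (l1 + σ)) := by
        have := (Matrix.isUnit_iff_isUnit_det _).mp hu
        rwa [T2] at this
      have hUl0 : IsUnit l0 := isUnit_of_mul_isUnit_left hUprod
      have hUl1σ : IsUnit (l1 + σ) := isUnit_of_mul_isUnit_right hUprod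
      by_cases hdiff : IsUnit (l1 - l0)
      · -- Hensel lifting case
        set τ := Matrix.trace A with hτ
        set δ := A.det with hδ
        have hccτ : constantCoeff (R := R) τ = τb := (VC_trace_map2 (constantCoeff (R := R)) A).symm
        have hccδ : constantCoeff (R := R) δ = δb := by
          rw [hδ, hδb, hAbar, RingHom.map_det, RingHom.mapMatrix_apply]
        have hb : IsUnit (C (R := R) l0 + C (R := R) l0 - τ) := by
          rw [PowerSeries.isUnit_iff_constantCoeff]
          have hcc : constantCoeff (R := R) (C (R := R) l0 + C (R := R) l0 - τ) = -(l1 - l0) := by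
            rw [map_sub, map_add, constantCoeff_C, hccτ]
            linear_combination hl0
          rw [hcc]
          exact hdiff.neg
        have hc : constantCoeff (R := R) (C (R := R) l0 * C (R := R) l0 - τ * C (R := R) l0 + δ) = 0 := by
          rw [map_add, map_sub, map_mul, map_mul, constantCoeff_C, hccτ, hccδ]
          linear_combination l0 * hl0 - T1
        obtain ⟨z, hz, hz0⟩ := VC_quad_root _ _ hb hc
        set ρ₀ : R⟦X⟧ := C (R := R) l0 + z with hρ₀def
        have hroot : ρ₀ * ρ₀ - τ * ρ₀ + δ = 0 := by
          rw [hρ₀def]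
          linear_combination hz
        have hccρ₀ : constantCoeff (R := R) ρ₀ = l0 := by
          rw [hρ₀def, map_add, constantCoeff_C, hz0, add_zero]
        set ρ₁ : R⟦X⟧ := τ - ρ₀ with hρ₁def
        set u : R⟦X⟧ := ρ₁ - ρ₀ with hudef
        have huu : IsUnit u := by
          rw [PowerSeries.isUnit_iff_constantCoeff]
          have : constantCoeff (R := R) u = l1 - l0 := by
            rw [hudef, hρ₁def, map_sub, map_sub, hccρ₀, hccτ]
            linear_combination hl0
          rw [this]; exact hdiff
        obtain ⟨w, hw⟩ := isUnit_iff_exists_inv.mp huu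
        clear_value τ δ ρ₀ ρ₁ u
        set E := w • (A - ρ₀ • (1 : Matrix (Fin 2) (Fin 2) R⟦X⟧)) with hEdef
        clear_value E
        have hroot' : ρ₀ * ρ₀ - (A 0 0 + A 1 1) * ρ₀ +
            (A 0 0 * A 1 1 - A 0 1 * A 1 0) = 0 := by
          have := hroot
          rw [hτ, hδ, Matrix.trace_fin_two, Matrix.det_fin_two] at this
          exact this
        have hw' : (A 0 0 + A 1 1 - ρ₀ - ρ₀) * w = 1 := by
          have := hw
          rw [hudef, hρ₁def, hτ, Matrix.trace_fin_two] at this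
          linear_combination this
        have hc1 : Matrix.trace A = u + ρ₀ + ρ₀ := by
          rw [hudef, hρ₁def, hτ]; ring
        have hc2 : A.det = u * ρ₀ + ρ₀ * ρ₀ := by
          rw [hudef, hρ₁def, ← hδ]
          linear_combination hroot
        have hMsq : (A - ρ₀ • 1) * (A - ρ₀ • 1) = u • (A - ρ₀ • 1) := by
          rw [sub_mul, mul_sub, Matrix.smul_mul, Matrix.mul_smul, one_mul, mul_one,
            VC_ch2 A, hc1, hc2]
          simp only [smul_sub, sub_smul, add_smul, mul_smul, one_smul]
          abel
        have hEidem : IsIdempotentElem E := by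
          show E * E = E
          rw [hEdef, Matrix.smul_mul, Matrix.mul_smul, hMsq, smul_smul, smul_smul]
          congr 1
          linear_combination w * hw
        have hEcomm : A * E = E * A := by
          rw [hEdef, Matrix.mul_smul, Matrix.smul_mul]
          congr 1
          rw [mul_sub, sub_mul, Matrix.mul_smul, Matrix.smul_mul, Matrix.mul_one,
            Matrix.one_mul]
        have hAeq : A = ρ₀ • 1 + u • E := by
          rw [hEdef, smul_smul, hw, one_smul]
          abel
        have hrepr : A + (C (R := R) σ) • E = (u + C (R := R) σ) • E + ρ₀ • 1 := by
          conv_lhs => rw [hAeq]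
          simp only [smul_sub, sub_smul, add_smul, mul_smul, one_smul]
          abel
        have hdetM : (A - ρ₀ • 1).det = 0 := by
          have : A - ρ₀ • 1 = (1 : R⟦X⟧) • A + (-ρ₀) • 1 := by
            rw [one_smul, neg_smul, sub_eq_add_neg]
          rw [this, VC_det_comb, ← hδ, ← hτ]
          linear_combination hroot
        have hdetE : E.det = 0 := by
          rw [hEdef, Matrix.det_smul, hdetM, mul_zero]
        have htrE : Matrix.trace E = 1 := by
          rw [hEdef, Matrix.trace_smul, Matrix.trace_sub, Matrix.trace_smul,
            Matrix.trace_one, smul_eq_mul, smul_eq_mul]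
          rw [Matrix.trace_fin_two]
          simp only [Fintype.card_fin]
          push_cast
          linear_combination hw'
        have hdetfin : (A + (C (R := R) σ) • E).det = ρ₀ * (ρ₁ + C (R := R) σ) := by
          rw [hrepr, VC_det_comb, hdetE, htrE]
          rw [hudef]
          ring
        refine ⟨E, hEidem, hEcomm, ?_⟩
        rw [Matrix.isUnit_iff_isUnit_det, hdetfin, PowerSeries.isUnit_iff_constantCoeff]
        have : constantCoeff (R := R) (ρ₀ * (ρ₁ + C (R := R) σ)) = l0 * (l1 + σ) := by
          rw [map_mul, map_add, constantCoeff_C, hccρ₀, hρ₁def, map_sub, hccτ, hccρ₀]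
          have : τb - l0 = l1 := by rw [hl0]; ring
          rw [this]
        rw [this]
        exact hUprod
      · -- degenerate case: l1 - l0 not a unit, then A itself is a unit
        have hUl1 : IsUnit l1 := by
          by_contra hn
          have h1 : l1 ∈ IsLocalRing.maximalIdeal R := by
            rwa [IsLocalRing.mem_maximalIdeal, mem_nonunits_iff]
          have h2 : l1 - l0 ∈ IsLocalRing.maximalIdeal R := by
            rwa [IsLocalRing.mem_maximalIdeal, mem_nonunits_iff]
          have h3 : l0 ∈ IsLocalRing.maximalIdeal R := by
            have heq : l0 = l1 - (l1 - l0) := by ring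
            rw [heq]
            exact Ideal.sub_mem _ h1 h2
          rw [IsLocalRing.mem_maximalIdeal, mem_nonunits_iff] at h3
          exact h3 hUl0
        have hUδ : IsUnit δb := by rw [← T1]; exact hUl0.mul hUl1
        have hAu : IsUnit A := by
          rw [VC_unit_lift, Matrix.isUnit_iff_isUnit_det]
          exact hUδ
        exact ⟨0, IsIdempotentElem.zero, by rw [mul_zero, zero_mul],
          by simpa using hAu⟩
  · -- det e = 1 : e is a unit, hence e = 1
    have heu : IsUnit e := (Matrix.isUnit_iff_isUnit_det _).mpr (by rw [hd1]; exact isUnit_one)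
    have he1 : e = 1 := by
      obtain ⟨w, hw⟩ := heu.exists_right_inv
      calc e = e * (e * w) := by rw [hw, mul_one]
        _ = (e * e) * w := by rw [mul_assoc]
        _ = e * w := by rw [he]
        _ = 1 := hw
    refine ⟨1, IsIdempotentElem.one, by rw [mul_one, one_mul], ?_⟩
    rw [VC_unit_lift, VC_map_affine, Matrix.map_one _ (map_zero _) (map_one _)]
    rw [he1] at hu
    exact hu

theorem M2_powerSeries_very_clean_iff_comm (R : Type*) [CommRing R] [IsLocalRing R]
    (A : Matrix (Fin 2) (Fin 2) (PowerSeries R)) :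
    IsVeryClean A ↔ IsVeryClean (A.map PowerSeries.constantCoeff) := by
  constructor
  · rintro ⟨E, hE, hcomm, hor⟩
    set Φ := (PowerSeries.constantCoeff (R := R)).mapMatrix
      (m := Fin 2) with hΦ
    have hmap : ∀ B : Matrix (Fin 2) (Fin 2) (PowerSeries R),
        B.map (PowerSeries.constantCoeff (R := R)) = Φ B := fun B => rfl
    refine ⟨E.map (PowerSeries.constantCoeff (R := R)), ?_, ?_, ?_⟩
    · show _ * _ = _
      rw [hmap, ← map_mul, hE]
    · rw [hmap, hmap, ← map_mul, ← map_mul, hcomm]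
    · rcases hor with h | h
      · left
        rw [hmap, hmap, ← map_sub]
        exact h.map Φ
      · right
        rw [hmap, hmap, ← map_add]
        exact h.map Φ
  · rintro ⟨e, he, hcomm, hor⟩
    rcases hor with h | h
    · have h' : IsUnit (A.map (PowerSeries.constantCoeff (R := R)) + (-1 : R) • e) := by
        rw [neg_smul, one_smul, ← sub_eq_add_neg]
        exact h
      obtain ⟨E, hE, hc, hunit⟩ := VC_core A (-1 : R) e he hcomm h'
      refine ⟨E, hE, hc, Or.inl ?_⟩
      rw [map_neg, map_one, neg_smul, one_smul, ← sub_eq_add_neg] at hunit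
      exact hunit
    · have h' : IsUnit (A.map (PowerSeries.constantCoeff (R := R)) + (1 : R) • e) := by
        rw [one_smul]; exact h
      obtain ⟨E, hE, hc, hunit⟩ := VC_core A (1 : R) e he hcomm h'
      refine ⟨E, hE, hc, Or.inr ?_⟩
      rw [map_one, one_smul] at hunit
      exact hunit
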